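/- Let ψ ∈ L²(ℝ²) with ‖ψ‖ > 0, let L > 0, and let x₀ = (a,b) maximize F(x₀) = ∫_{x₀+(-L,L)²}|ψ|²dx over ℝ². Define φ(x) = min{φ₀(ξ-a), φ₀(η-b)} for x=(ξ,η), where φ₀ is the piecewise linear cutoff equal to 1 on [-L,L], 0 outside [-3L,3L], and linear with slope ±1/(2L) in between. Then ∫_{ℝ²} |∇φ|² ψ² dx ≤ (2/L²) ∫_{x₀+(-L,L)²} |ψ|² dx. -/

import Mathlib

open MeasureTheory

private lemma coord_abs_le_norm' (v : EuclideanSpace ℝ (Fin 2)) (i : Fin 2) : |v i| ≤ ‖v‖ := by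
  rw [EuclideanSpace.norm_eq]
  calc |v i| = Real.sqrt (‖v i‖ ^ 2) := by
        rw [Real.sqrt_sq_eq_abs, Real.norm_eq_abs, abs_abs]
    _ ≤ Real.sqrt (∑ j, ‖v j‖ ^ 2) :=
        Real.sqrt_le_sqrt (Finset.single_le_sum (f := fun j => ‖v j‖ ^ 2)
          (fun j _ => sq_nonneg _) (Finset.mem_univ i))

private lemma isOpen_square' (L : ℝ) (y : EuclideanSpace ℝ (Fin 2)) :
    IsOpen {x : EuclideanSpace ℝ (Fin 2) | ∀ i, x i - y i ∈ Set.Ioo (-L) L} := by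
  have h : {x : EuclideanSpace ℝ (Fin 2) | ∀ i, x i - y i ∈ Set.Ioo (-L) L}
      = ⋂ i, (fun x : EuclideanSpace ℝ (Fin 2) => x i - y i) ⁻¹' Set.Ioo (-L) L := by
    ext x; simp
  rw [h]
  exact isOpen_iInter_of_finite fun i =>
    isOpen_Ioo.preimage (((EuclideanSpace.proj i).continuous).sub continuous_const)

private lemma hyperplane_null' (i : Fin 2) (b : ℝ) :
    volume {x : EuclideanSpace ℝ (Fin 2) | x i = b} = 0 := by
  have h : {x : EuclideanSpace ℝ (Fin 2) | x i = b} =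
      (AffineSubspace.mk' (EuclideanSpace.single i b)
        (LinearMap.ker (EuclideanSpace.projₗ i)) : Set (EuclideanSpace ℝ (Fin 2))) := by
    ext x
    simp only [Set.mem_setOf_eq, SetLike.mem_coe, AffineSubspace.mem_mk',
      LinearMap.mem_ker, vsub_eq_sub]
    constructor
    · intro hx
      show (x - EuclideanSpace.single i b) i = 0
      simp [EuclideanSpace.single_apply, hx]
    · intro hx
      have : (x - EuclideanSpace.single i b) i = 0 := hx
      simp [EuclideanSpace.single_apply] at this
      linarith
  rw [h]
  refine Measure.addHaar_affineSubspace _ _ ?_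
  intro htop
  have hmem : EuclideanSpace.single i (b + 1) ∈ AffineSubspace.mk' (EuclideanSpace.single i b)
      (LinearMap.ker (EuclideanSpace.projₗ i)) := htop ▸ AffineSubspace.mem_top ℝ _ _
  rw [AffineSubspace.mem_mk', LinearMap.mem_ker] at hmem
  have : (EuclideanSpace.single i (b + 1) - EuclideanSpace.single i b) i = 0 := hmem
  simp [EuclideanSpace.single_apply] at this

set_option maxHeartbeats 2000000 in
/-- If `x₀ = (a,b)` maximizes the local mass `F(x₀) = ∫_{x₀+(-L,L)²}|ψ|²` and
`φ(x) = min{φ₀(ξ-a), φ₀(η-b)}` with `φ₀` the piecewise linear cutoff at scale `L`, then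
`∫ |∇φ|² ψ² dx ≤ (2/L²) ∫_{x₀+(-L,L)²} |ψ|² dx`. -/
theorem gradient_cutoff_bound (L : ℝ) (hL : 0 < L)
    (ψ : EuclideanSpace ℝ (Fin 2) → ℝ) (hψ : MemLp ψ 2 volume)
    (hpos : 0 < ∫ x, ψ x ^ 2)
    (φ₀ : ℝ → ℝ)
    (hdef : ∀ t, φ₀ t = if |t| < L then 1 else if 3 * L ≤ |t| then 0
      else 3 / 2 - |t| / (2 * L))
    (x₀ : EuclideanSpace ℝ (Fin 2))
    (hmax : ∀ y : EuclideanSpace ℝ (Fin 2),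
      (∫ x in {x : EuclideanSpace ℝ (Fin 2) | ∀ i, x i - y i ∈ Set.Ioo (-L) L}, ψ x ^ 2) ≤
      ∫ x in {x : EuclideanSpace ℝ (Fin 2) | ∀ i, x i - x₀ i ∈ Set.Ioo (-L) L}, ψ x ^ 2) :
    ∫ x, ‖gradient (fun y : EuclideanSpace ℝ (Fin 2) =>
        min (φ₀ (y 0 - x₀ 0)) (φ₀ (y 1 - x₀ 1))) x‖ ^ 2 * ψ x ^ 2 ≤
      (2 / L ^ 2) *
        ∫ x in {x : EuclideanSpace ℝ (Fin 2) | ∀ i, x i - x₀ i ∈ Set.Ioo (-L) L}, ψ x ^ 2 := by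
  classical
  have h2L : (0:ℝ) < 2 * L := by linarith
  set φ : EuclideanSpace ℝ (Fin 2) → ℝ :=
    fun y => min (φ₀ (y 0 - x₀ 0)) (φ₀ (y 1 - x₀ 1)) with hφdef
  -- closed form of φ₀
  have hform : ∀ t, φ₀ t = max 0 (min 1 (3 / 2 - |t| / (2 * L))) := by
    intro t
    rw [hdef t]
    rcases lt_or_ge |t| L with h | h
    · rw [if_pos h]
      have h1 : |t| / (2 * L) < 1 / 2 := by rw [div_lt_iff₀ h2L]; linarith
      rw [min_eq_left (by linarith), max_eq_right (by norm_num)]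
    · rw [if_neg (not_lt.2 h)]
      have h1 : 1 / 2 ≤ |t| / (2 * L) := by rw [le_div_iff₀ h2L]; linarith
      rcases le_or_gt (3 * L) |t| with h3 | h3
      · rw [if_pos h3]
        have h2 : 3 / 2 ≤ |t| / (2 * L) := by rw [le_div_iff₀ h2L]; linarith
        rw [min_eq_right (by linarith), max_eq_left (by linarith)]
      · rw [if_neg (not_le.2 h3)]
        have h2 : |t| / (2 * L) < 3 / 2 := by rw [div_lt_iff₀ h2L]; linarith
        rw [min_eq_right (by linarith), max_eq_right (by linarith)]
  have hφ₀nonneg : ∀ t, 0 ≤ φ₀ t := fun t => (hform t) ▸ le_max_left _ _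
  have hφ₀one : ∀ t, |t| < L → φ₀ t = 1 := fun t ht => by rw [hdef t, if_pos ht]
  have hφ₀zero : ∀ t, 3 * L ≤ |t| → φ₀ t = 0 := fun t ht => by
    rw [hdef t, if_neg (by push_neg; nlinarith [abs_nonneg t]), if_pos ht]
  -- Lipschitz bound for φ₀
  have hlip0 : ∀ s t : ℝ, |φ₀ s - φ₀ t| ≤ |s - t| / (2 * L) := by
    intro s t
    rw [hform s, hform t]
    have hrhs : 0 ≤ |s - t| / (2 * L) := div_nonneg (abs_nonneg _) h2L.le
    refine (abs_max_sub_max_le_max _ _ _ _).trans (max_le (by simpa using hrhs) ?_)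
    refine (abs_min_sub_min_le_max _ _ _ _).trans (max_le (by simpa using hrhs) ?_)
    have he : (3 / 2 - |s| / (2 * L)) - (3 / 2 - |t| / (2 * L)) = (|t| - |s|) / (2 * L) := by
      ring
    rw [he, abs_div, abs_of_pos h2L, div_le_div_iff_of_pos_right h2L]
    calc abs (|t| - |s|) ≤ |t - s| := abs_abs_sub_abs_le_abs_sub t s
      _ = |s - t| := abs_sub_comm t s
  -- φ is Lipschitz with constant (2L)⁻¹
  have hlipφ : LipschitzWith ⟨(2 * L)⁻¹, by positivity⟩ φ := by
    refine LipschitzWith.of_dist_le_mul fun x y => ?_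
    rw [Real.dist_eq, dist_eq_norm]
    have key : ∀ i : Fin 2, |φ₀ (x i - x₀ i) - φ₀ (y i - x₀ i)| ≤ (2 * L)⁻¹ * ‖x - y‖ := by
      intro i
      refine (hlip0 _ _).trans ?_
      have h1 : (x i - x₀ i) - (y i - x₀ i) = (x - y) i := by
        rw [PiLp.sub_apply]; ring
      rw [h1, div_eq_inv_mul]
      exact mul_le_mul_of_nonneg_left (coord_abs_le_norm' _ _) (by positivity)
    exact (abs_min_sub_min_le_max _ _ _ _).trans (max_le (key 0) (key 1))
  -- gradient norm bound
  have hgradnorm : ∀ x, ‖gradient φ x‖ = ‖fderiv ℝ φ x‖ := fun x => by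
    simp only [gradient, LinearIsometryEquiv.norm_map]
  have hgradle : ∀ x, ‖gradient φ x‖ ≤ (2 * L)⁻¹ := by
    intro x
    rw [hgradnorm x]
    exact norm_fderiv_le_of_lipschitz ℝ hlipφ
  -- gradient vanishes where φ is locally constant
  have hconst : ∀ (x : EuclideanSpace ℝ (Fin 2)) (c : ℝ), (φ =ᶠ[nhds x] fun _ => c) →
      gradient φ x = 0 := by
    intro x c h
    rw [h.gradient_eq]
    exact gradient_const x c
  have hzero_in : ∀ x : EuclideanSpace ℝ (Fin 2),
      (∀ i, |x i - x₀ i| < L) → gradient φ x = 0 := by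
    intro x hx
    refine hconst x 1 ?_
    have hε : 0 < min (L - |x 0 - x₀ 0|) (L - |x 1 - x₀ 1|) := by
      have h0 := hx 0; have h1 := hx 1
      simp only [lt_min_iff]; constructor <;> linarith
    filter_upwards [Metric.ball_mem_nhds x hε] with y hy
    have hy' : ‖y - x‖ < min (L - |x 0 - x₀ 0|) (L - |x 1 - x₀ 1|) := by
      rw [← dist_eq_norm]; exact hy
    have key : ∀ i : Fin 2, ‖y - x‖ < L - |x i - x₀ i| → |y i - x₀ i| < L := by
      intro i hi
      have h1 : |y i - x i| ≤ ‖y - x‖ := by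
        have := coord_abs_le_norm' (y - x) i
        rwa [PiLp.sub_apply] at this
      calc |y i - x₀ i| ≤ |y i - x i| + |x i - x₀ i| := by
            have := abs_add_le (y i - x i) (x i - x₀ i)
            simpa [sub_add_sub_cancel] using this
        _ < L := by linarith
    have e0 : φ₀ (y 0 - x₀ 0) = 1 := hφ₀one _ (key 0 (hy'.trans_le (min_le_left _ _)))
    have e1 : φ₀ (y 1 - x₀ 1) = 1 := hφ₀one _ (key 1 (hy'.trans_le (min_le_right _ _)))
    show min (φ₀ (y 0 - x₀ 0)) (φ₀ (y 1 - x₀ 1)) = 1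
    rw [e0, e1, min_self]
  have hzero_out : ∀ x : EuclideanSpace ℝ (Fin 2),
      (∃ i, 3 * L < |x i - x₀ i|) → gradient φ x = 0 := by
    intro x hex
    obtain ⟨i, hi⟩ := hex
    have h01 : i = 0 ∨ i = 1 := by omega
    refine hconst x 0 ?_
    have hε : 0 < |x i - x₀ i| - 3 * L := by linarith
    filter_upwards [Metric.ball_mem_nhds x hε] with y hy
    have hy' : ‖y - x‖ < |x i - x₀ i| - 3 * L := by rw [← dist_eq_norm]; exact hy
    have h1 : |y i - x i| ≤ ‖y - x‖ := by
      have := coord_abs_le_norm' (y - x) i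
      rwa [PiLp.sub_apply] at this
    have h2 : 3 * L ≤ |y i - x₀ i| := by
      have := abs_sub_abs_le_abs_sub (x i - x₀ i) (y i - x₀ i)
      have h3 : |(x i - x₀ i) - (y i - x₀ i)| = |y i - x i| := by
        rw [← abs_neg]; ring_nf
      rw [h3] at this
      linarith
    have e : φ₀ (y i - x₀ i) = 0 := hφ₀zero _ h2
    show min (φ₀ (y 0 - x₀ 0)) (φ₀ (y 1 - x₀ 1)) = 0
    rcases h01 with rfl | rfl
    · rw [e, min_eq_left (hφ₀nonneg _)]
    · rw [e, min_eq_right (hφ₀nonneg _)]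
  -- the covering squares
  set pt : ℝ → ℝ → EuclideanSpace ℝ (Fin 2) :=
    fun s t => (WithLp.equiv 2 (Fin 2 → ℝ)).symm ![s, t] with hptdef
  have hpt0 : ∀ s t : ℝ, pt s t 0 = s := fun s t => rfl
  have hpt1 : ∀ s t : ℝ, pt s t 1 = t := fun s t => rfl
  set S : EuclideanSpace ℝ (Fin 2) → Set (EuclideanSpace ℝ (Fin 2)) :=
    fun y => {x | ∀ i, x i - y i ∈ Set.Ioo (-L) L} with hSdef
  set Q : ℝ × ℝ → Set (EuclideanSpace ℝ (Fin 2)) :=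
    fun c => S (x₀ + pt c.1 c.2) with hQdef
  set D : Finset ℝ := {-(2 * L), 0, 2 * L} with hDdef
  set C : Finset (ℝ × ℝ) := (D ×ˢ D).erase (0, 0) with hCdef
  have hCcard : C.card = 8 := by
    have hD : D.card = 3 := by
      rw [hDdef]
      rw [Finset.card_insert_of_notMem (by simp; constructor <;> intro h <;> nlinarith),
        Finset.card_insert_of_notMem (by simp; intro h; nlinarith)]
      rfl
    have h00 : ((0 : ℝ), (0 : ℝ)) ∈ D ×ˢ D := by
      rw [Finset.mem_product]; constructor <;> simp [hDdef]
    rw [hCdef, Finset.card_erase_of_mem h00, Finset.card_product, hD]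
  -- integrability
  have hψ2 : Integrable (fun x => ψ x ^ 2) volume := hψ.integrable_sq
  have hQmeas : ∀ c : ℝ × ℝ, MeasurableSet (Q c) := fun c =>
    (isOpen_square' L _).measurableSet
  set g : EuclideanSpace ℝ (Fin 2) → ℝ := fun x => ‖gradient φ x‖ ^ 2 * ψ x ^ 2 with hgdef
  set R : EuclideanSpace ℝ (Fin 2) → ℝ := fun x =>
    (1 / (4 * L ^ 2)) * ∑ c ∈ C, (Q c).indicator (fun z => ψ z ^ 2) x with hRdef
  have hgm : AEStronglyMeasurable g volume := by
    have h1 : Measurable fun x => gradient φ x := by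
      have : Continuous fun f : EuclideanSpace ℝ (Fin 2) →L[ℝ] ℝ =>
          (InnerProductSpace.toDual ℝ (EuclideanSpace ℝ (Fin 2))).symm f :=
        (InnerProductSpace.toDual ℝ (EuclideanSpace ℝ (Fin 2))).symm.continuous
      exact this.measurable.comp (measurable_fderiv ℝ φ)
    have h2 : AEMeasurable (fun x => ‖gradient φ x‖ ^ 2) volume :=
      (h1.norm.pow_const 2).aemeasurable
    exact (h2.mul (hψ.aestronglyMeasurable.aemeasurable.pow_const 2)).aestronglyMeasurable
  have hgbound : ∀ x, g x ≤ (2 * L)⁻¹ ^ 2 * ψ x ^ 2 := by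
    intro x
    exact mul_le_mul_of_nonneg_right
      (pow_le_pow_left₀ (norm_nonneg _) (hgradle x) 2) (sq_nonneg _)
  have hgnonneg : ∀ x, 0 ≤ g x := fun x => mul_nonneg (sq_nonneg _) (sq_nonneg _)
  have hgint : Integrable g volume := by
    refine Integrable.mono' (hψ2.const_mul ((2 * L)⁻¹ ^ 2)) hgm (ae_of_all _ fun x => ?_)
    rw [Real.norm_eq_abs, abs_of_nonneg (hgnonneg x)]
    exact hgbound x
  have hRint : Integrable R volume :=
    (integrable_finset_sum C fun c _ => hψ2.indicator (hQmeas c)).const_mul _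
  -- the bad (null) set
  set N : Set (EuclideanSpace ℝ (Fin 2)) :=
    {x | ∃ i, |x i - x₀ i| = L ∨ |x i - x₀ i| = 3 * L} with hNdef
  have hNnull : volume N = 0 := by
    have hsub : N ⊆ ⋃ i : Fin 2,
        ({x : EuclideanSpace ℝ (Fin 2) | x i = x₀ i + L} ∪ {x | x i = x₀ i - L} ∪
          {x | x i = x₀ i + 3 * L} ∪ {x | x i = x₀ i - 3 * L}) := by
      rintro x ⟨i, h⟩
      refine Set.mem_iUnion.2 ⟨i, ?_⟩
      rcases h with h | h
      · rcases abs_eq hL.le |>.1 h with h | h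
        · left; left; left; show x i = x₀ i + L; linarith
        · left; left; right; show x i = x₀ i - L; linarith
      · rcases abs_eq (by linarith : (0:ℝ) ≤ 3 * L) |>.1 h with h | h
        · left; right; show x i = x₀ i + 3 * L; linarith
        · right; show x i = x₀ i - 3 * L; linarith
    refine measure_mono_null hsub (measure_iUnion_null fun i => ?_)
    exact measure_union_null (measure_union_null (measure_union_null
      (hyperplane_null' i _) (hyperplane_null' i _)) (hyperplane_null' i _))
      (hyperplane_null' i _)
  -- the key pointwise bound away from N
  have hkey : ∀ x ∉ N, g x ≤ R x := by
    intro x hx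
    have hRnonneg : 0 ≤ ∑ c ∈ C, (Q c).indicator (fun z => ψ z ^ 2) x :=
      Finset.sum_nonneg fun c _ => Set.indicator_nonneg (fun z _ => sq_nonneg _) x
    have hne : ∀ i : Fin 2, |x i - x₀ i| ≠ L ∧ |x i - x₀ i| ≠ 3 * L := by
      intro i
      constructor <;> intro h <;> exact hx ⟨i, by simp [h]⟩
    by_cases hcase1 : ∀ i : Fin 2, |x i - x₀ i| < L
    · rw [hgdef]
      simp only
      rw [hzero_in x hcase1]
      simpa using mul_nonneg (by positivity) hRnonneg
    by_cases hcase2 : ∃ i : Fin 2, 3 * L < |x i - x₀ i|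
    · rw [hgdef]
      simp only
      rw [hzero_out x hcase2]
      simpa using mul_nonneg (by positivity) hRnonneg
    -- main case
    push_neg at hcase1 hcase2
    obtain ⟨i₀, hi₀⟩ := hcase1
    have hi₀' : L < |x i₀ - x₀ i₀| := lt_of_le_of_ne hi₀ (Ne.symm (hne i₀).1)
    have hlt3 : ∀ i : Fin 2, |x i - x₀ i| < 3 * L := fun i =>
      lt_of_le_of_ne (hcase2 i) (hne i).2
    -- choose the offset per coordinate
    set d : Fin 2 → ℝ := fun i =>
      if x i - x₀ i < -L then -(2 * L) else if L < x i - x₀ i then 2 * L else 0 with hddef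
    have hdD : ∀ i, d i ∈ D := by
      intro i
      simp only [hddef]
      split_ifs <;> simp [hDdef]
    have hdgood : ∀ i, x i - x₀ i - d i ∈ Set.Ioo (-L) L := by
      intro i
      have h3 := hlt3 i
      rw [abs_lt] at h3
      have hneq := (hne i).1
      simp only [hddef]
      split_ifs with h1 h2
      · constructor <;> simp only [Set.mem_Ioo] at * <;> [linarith; linarith]
      · constructor <;> [linarith; linarith]
      · push_neg at h1 h2
        have hL1 : x i - x₀ i ≠ L := fun h => hneq (by rw [h, abs_of_pos hL])
        have hL2 : x i - x₀ i ≠ -L := fun h => hneq (by rw [h, abs_neg, abs_of_pos hL])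
        constructor
        · rcases lt_or_eq_of_le h1 with h | h
          · simpa using h
          · exact absurd h.symm hL2
        · rcases lt_or_eq_of_le h2 with h | h
          · simpa using h
          · exact absurd h hL1
    have hd0 : d i₀ ≠ 0 := by
      simp only [hddef]
      split_ifs with h1 h2
      · intro h; nlinarith
      · intro h; nlinarith
      · push_neg at h1 h2
        intro _
        exact absurd (abs_le.2 ⟨h1, h2⟩) (not_le.2 hi₀')
    have hcC : (d 0, d 1) ∈ C := by
      rw [hCdef, Finset.mem_erase]
      refine ⟨?_, Finset.mem_product.2 ⟨hdD 0, hdD 1⟩⟩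
      intro h
      have h01 : i₀ = 0 ∨ i₀ = 1 := by omega
      rcases h01 with rfl | rfl
      · exact hd0 (congrArg Prod.fst h)
      · exact hd0 (congrArg Prod.snd h)
    have hxQ : x ∈ Q (d 0, d 1) := by
      show ∀ i : Fin 2, x i - (x₀ + pt (d 0) (d 1)) i ∈ Set.Ioo (-L) L
      intro i
      have h01 : i = 0 ∨ i = 1 := by omega
      have e : x i - (x₀ + pt (d 0) (d 1)) i = x i - x₀ i - d i := by
        rcases h01 with rfl | rfl
        · rw [PiLp.add_apply, hpt0]; ring
        · rw [PiLp.add_apply, hpt1]; ring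
      rw [e]
      exact hdgood i
    have hsum : ψ x ^ 2 ≤ ∑ c ∈ C, (Q c).indicator (fun z => ψ z ^ 2) x := by
      have h := Finset.single_le_sum
        (f := fun c => (Q c).indicator (fun z => ψ z ^ 2) x)
        (fun c _ => Set.indicator_nonneg (fun z _ => sq_nonneg _) x) hcC
      exact le_trans (le_of_eq (Set.indicator_of_mem hxQ (fun z => ψ z ^ 2)).symm) h
    have h4 : ((2 * L : ℝ))⁻¹ ^ 2 = 1 / (4 * L ^ 2) := by
      rw [one_div]
      congr 1
      ring
    calc g x ≤ (2 * L)⁻¹ ^ 2 * ψ x ^ 2 := hgbound x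
      _ = (1 / (4 * L ^ 2)) * ψ x ^ 2 := by rw [h4]
      _ ≤ (1 / (4 * L ^ 2)) * ∑ c ∈ C, (Q c).indicator (fun z => ψ z ^ 2) x :=
          mul_le_mul_of_nonneg_left hsum (by positivity)
      _ = R x := rfl
  -- put everything together
  have hNae : ∀ᵐ x ∂(volume : Measure (EuclideanSpace ℝ (Fin 2))), x ∉ N := by
    rw [ae_iff]
    simpa only [not_not, Set.setOf_mem_eq] using hNnull
  have hae : ∀ᵐ x ∂(volume : Measure (EuclideanSpace ℝ (Fin 2))), g x ≤ R x := by
    filter_upwards [hNae] with x hx using hkey x hx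
  have hterm : ∀ c ∈ C, ∫ x in Q c, ψ x ^ 2 ≤
      ∫ x in {x : EuclideanSpace ℝ (Fin 2) | ∀ i, x i - x₀ i ∈ Set.Ioo (-L) L}, ψ x ^ 2 := by
    intro c _
    simp only [hQdef, hSdef]
    exact hmax _
  have hsumle : ∑ c ∈ C, ∫ x in Q c, ψ x ^ 2 ≤
      8 * ∫ x in {x : EuclideanSpace ℝ (Fin 2) | ∀ i, x i - x₀ i ∈ Set.Ioo (-L) L}, ψ x ^ 2 := by
    calc ∑ c ∈ C, ∫ x in Q c, ψ x ^ 2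
        ≤ ∑ _c ∈ C, ∫ x in {x : EuclideanSpace ℝ (Fin 2) |
            ∀ i, x i - x₀ i ∈ Set.Ioo (-L) L}, ψ x ^ 2 :=
          Finset.sum_le_sum hterm
      _ = 8 * _ := by rw [Finset.sum_const, hCcard, nsmul_eq_mul]; norm_num
  calc ∫ x, g x ≤ ∫ x, R x := integral_mono_ae hgint hRint hae
    _ = (1 / (4 * L ^ 2)) * ∑ c ∈ C, ∫ x in Q c, ψ x ^ 2 := by
        rw [hRdef]
        rw [MeasureTheory.integral_const_mul]
        rw [integral_finset_sum C (fun c _ => hψ2.indicator (hQmeas c))]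
        congr 1
        exact Finset.sum_congr rfl fun c _ => integral_indicator (hQmeas c)
    _ ≤ (1 / (4 * L ^ 2)) *
        (8 * ∫ x in {x : EuclideanSpace ℝ (Fin 2) |
          ∀ i, x i - x₀ i ∈ Set.Ioo (-L) L}, ψ x ^ 2) :=
        mul_le_mul_of_nonneg_left hsumle (by positivity)
    _ = (2 / L ^ 2) * ∫ x in {x : EuclideanSpace ℝ (Fin 2) |
          ∀ i, x i - x₀ i ∈ Set.Ioo (-L) L}, ψ x ^ 2 := by
        rw [← mul_assoc]
        congr 1
        field_simp
        ring
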